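/- Let θ ∈ (0,1), e ∈ [0,1], γ ∈ (0,1], δ ∈ [0,1] with γ + δ ≤ 1. Then the difference of the mean activities of altruists and reciprocators satisfies the exact identity Act_a(γ,δ) − Act_r(γ,δ) = (1−e)·δθ/(1−(1−γ)θ); in particular Act_a ≥ Act_r, with strict inequality whenever e < 1 and δ > 0. -/

import Mathlib

/-- Exact identity for the activity gap between altruists and reciprocators:
`Act_a − Act_r = (1−e)·δθ/(1−(1−γ)θ)`; hence `Act_a ≥ Act_r`, strictly when
`e < 1` and `δ > 0`. -/
theorem altruists_more_active_than_reciprocators (θ e γ δ : ℝ)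
    (hθ : θ ∈ Set.Ioo (0:ℝ) 1) (he : e ∈ Set.Icc (0:ℝ) 1)
    (hγ : γ ∈ Set.Ioc (0:ℝ) 1) (hδ : δ ∈ Set.Icc (0:ℝ) 1)
    (hsum : γ + δ ≤ 1) :
    let A := 1 - (1 - θ) / (1 - (1 - γ) * θ)
    let B := 1 - (1 - θ) / (1 - (1 - γ - δ) * θ)
    let ActR := 1 + e * A * (1 - γ) + B * ((1 - e) * γ / (γ + δ) + e * γ)
      + (1 - A) * (1 - γ) + (1 - B) * γ
    let ActA := 1 + A * (e * (1 - γ) + (1 - e) * δ / γ)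
      + B * (e * γ + (1 - e) * γ / (γ + δ))
      + (1 - A) * (1 - γ) + (1 - B) * γ
    ActA - ActR = (1 - e) * δ * θ / (1 - (1 - γ) * θ)
      ∧ ActR ≤ ActA ∧ (e < 1 → 0 < δ → ActR < ActA) := by
  obtain ⟨hθ0, hθ1⟩ := hθ
  obtain ⟨hγ0, hγ1⟩ := hγ
  intro A B ActR ActA
  have hD : (0:ℝ) < 1 - (1 - γ) * θ := by nlinarith
  have hDne : (1 - (1 - γ) * θ) ≠ 0 := ne_of_gt hD
  have hγne : γ ≠ 0 := ne_of_gt hγ0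
  have key : ActA - ActR = (1 - e) * δ * θ / (1 - (1 - γ) * θ) := by
    show (1 + A * (e * (1 - γ) + (1 - e) * δ / γ)
      + B * (e * γ + (1 - e) * γ / (γ + δ))
      + (1 - A) * (1 - γ) + (1 - B) * γ)
      - (1 + e * A * (1 - γ) + B * ((1 - e) * γ / (γ + δ) + e * γ)
      + (1 - A) * (1 - γ) + (1 - B) * γ) = (1 - e) * δ * θ / (1 - (1 - γ) * θ)
    have hA : A = γ * θ / (1 - (1 - γ) * θ) := by
      show 1 - (1 - θ) / (1 - (1 - γ) * θ) = γ * θ / (1 - (1 - γ) * θ)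
      rw [eq_div_iff hDne, sub_mul, div_mul_cancel₀ _ hDne]
      ring
    rw [hA]
    field_simp
    ring
  refine ⟨key, ?_, ?_⟩
  · have h : 0 ≤ (1 - e) * δ * θ / (1 - (1 - γ) * θ) := by
      apply div_nonneg _ (le_of_lt hD)
      exact mul_nonneg (mul_nonneg (by linarith [he.2]) hδ.1) hθ0.le
    linarith [key ▸ h]
  · intro he1 hδ0
    have h : 0 < (1 - e) * δ * θ / (1 - (1 - γ) * θ) := by
      apply div_pos _ hD
      exact mul_pos (mul_pos (by linarith) hδ0) hθ0
    linarith [key ▸ h]
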